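/- Let A ⊆ B ⊆ ℕ and let L be a complete linear order such that the cardinality of B \ A plus 1 equals the cardinality of L (as cardinals; in particular L is nonempty and at most countable). Then there is a chain 𝓛 of sets with A ⊆ X ⊆ B for all X ∈ 𝓛, such that A, B ∈ 𝓛, the chain ⟨𝓛, ⊊⟩ is order-isomorphic to L, and for every cut ⟨𝒜, ℬ⟩ of 𝓛 one has ⋃𝒜 ∈ 𝓛, ⋂ℬ ∈ 𝓛 and |⋂ℬ \ ⋃𝒜| ≤ 1. -/

import Mathlib

universe u

open Set

lemma aux_exists_covby {L : Type u} [LinearOrder L] [Countable L]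
    (hsup : ∀ S : Set L, ∃ s, IsLUB S s) {a b : L} (hab : a < b) :
    ∃ x y : L, a ≤ x ∧ x ⋖ y ∧ y ≤ b := by
  by_contra hcon
  push_neg at hcon
  have hdense : ∀ u v : L, a ≤ u → v ≤ b → u < v → ∃ w, u < w ∧ w < v := by
    intro u v hu hv huv
    by_contra h
    push_neg at h
    exact absurd (hcon u v hu ⟨huv, fun c hc1 hc2 => absurd (h c hc1) (not_le.mpr hc2)⟩) (not_lt.mpr hv)
  obtain ⟨c, hc1, hc2⟩ := hdense a b le_rfl le_rfl hab
  haveI : Nonempty (Set.Ioo a b) := ⟨⟨c, hc1, hc2⟩⟩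
  haveI : DenselyOrdered (Set.Ioo a b) := by
    constructor
    rintro ⟨u, hu⟩ ⟨v, hv⟩ huv
    rw [Subtype.mk_lt_mk] at huv
    obtain ⟨w, hw1, hw2⟩ := hdense u v hu.1.le hv.2.le huv
    exact ⟨⟨w, hu.1.trans hw1, hw2.trans hv.2⟩, Subtype.mk_lt_mk.mpr hw1,
      Subtype.mk_lt_mk.mpr hw2⟩
  haveI : NoMinOrder (Set.Ioo a b) := by
    constructor
    rintro ⟨u, hu⟩
    obtain ⟨w, hw1, hw2⟩ := hdense a u le_rfl hu.2.le hu.1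
    exact ⟨⟨w, hw1, hw2.trans hu.2⟩, Subtype.mk_lt_mk.mpr hw2⟩
  haveI : NoMaxOrder (Set.Ioo a b) := by
    constructor
    rintro ⟨u, hu⟩
    obtain ⟨w, hw1, hw2⟩ := hdense u b hu.1.le le_rfl hu.2
    exact ⟨⟨w, hu.1.trans hw1, hw2⟩, Subtype.mk_lt_mk.mpr hw1⟩
  obtain ⟨e⟩ := Order.iso_of_countable_dense (α := ℚ) (β := Set.Ioo a b)
  have hsqrt2 : (0 : ℝ) < Real.sqrt 2 := Real.sqrt_pos.mpr (by norm_num)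
  have hsqrt2' : Real.sqrt 2 < 2 := by
    nlinarith [Real.sq_sqrt (by norm_num : (0:ℝ) ≤ 2), Real.sqrt_nonneg 2]
  obtain ⟨s, hs⟩ := hsup {z : L | ∃ q : ℚ, (q : ℝ) < Real.sqrt 2 ∧ ((e q : Set.Ioo a b) : L) = z}
  have hub : ∀ q : ℚ, (q : ℝ) < Real.sqrt 2 → ((e q : Set.Ioo a b) : L) ≤ s := by
    intro q hq
    exact hs.1 ⟨q, hq, rfl⟩
  have has : a < s := lt_of_lt_of_le (e 0).2.1 (hub 0 (by exact_mod_cast hsqrt2))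
  have hsb : s < b := by
    have h1 : s ≤ ((e 2 : Set.Ioo a b) : L) := by
      apply hs.2
      rintro z ⟨q, hq, rfl⟩
      have : q ≤ 2 := by
        have : (q : ℝ) < 2 := hq.trans hsqrt2'
        exact_mod_cast this.le
      exact Subtype.coe_le_coe.mpr (e.le_iff_le.mpr this)
    exact lt_of_le_of_lt h1 (e 2).2.2
  set q0 : ℚ := e.symm ⟨s, has, hsb⟩ with hq0def
  have hq0 : ((e q0 : Set.Ioo a b) : L) = s := by
    rw [hq0def, e.apply_symm_apply]
  have hge : Real.sqrt 2 ≤ (q0 : ℝ) := by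
    by_contra hlt
    push_neg at hlt
    obtain ⟨q, hq1, hq2⟩ := exists_rat_btwn hlt
    have : ((e q : Set.Ioo a b) : L) ≤ ((e q0 : Set.Ioo a b) : L) := by
      rw [hq0]; exact hub q hq2
    have : q ≤ q0 := e.le_iff_le.mp (Subtype.coe_le_coe.mp this)
    have : (q : ℝ) ≤ (q0 : ℝ) := by exact_mod_cast this
    linarith
  have hle : (q0 : ℝ) ≤ Real.sqrt 2 := by
    by_contra hlt
    push_neg at hlt
    obtain ⟨r, hr1, hr2⟩ := exists_rat_btwn hlt
    have hub2 : s ≤ ((e r : Set.Ioo a b) : L) := by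
      apply hs.2
      rintro z ⟨q, hq, rfl⟩
      have : q ≤ r := by
        have : (q : ℝ) ≤ (r : ℝ) := le_of_lt (hq.trans hr1)
        exact_mod_cast this
      exact Subtype.coe_le_coe.mpr (e.le_iff_le.mpr this)
    have : q0 ≤ r := by
      have := hq0 ▸ hub2
      exact e.le_iff_le.mp (Subtype.coe_le_coe.mp this)
    have : (q0 : ℝ) ≤ (r : ℝ) := by exact_mod_cast this
    linarith
  exact irrational_sqrt_two ⟨q0, le_antisymm hle hge⟩

lemma aux_infinite_J {L : Type u} [LinearOrder L] [Countable L] [Infinite L]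
    (hsup : ∀ S : Set L, ∃ s, IsLUB S s) : Infinite {x : L | ∃ y, x ⋖ y} := by
  by_contra hfin
  rw [not_infinite_iff_finite] at hfin
  haveI : Finite ↥{x : L | ∃ y, x ⋖ y} := hfin
  set c : L → Set ↥{x : L | ∃ y, x ⋖ y} :=
    fun x => {j | ∃ y, (j : L) ⋖ y ∧ y ≤ x} with hc
  have key : ∀ x x' : L, x < x' → c x = c x' → False := by
    intro x x' hxx' hcc
    obtain ⟨u, v, hu, huv, hv⟩ := aux_exists_covby hsup hxx'
    have hmem : (⟨u, ⟨v, huv⟩⟩ : ↥{x : L | ∃ y, x ⋖ y}) ∈ c x' := ⟨v, huv, hv⟩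
    rw [← hcc] at hmem
    obtain ⟨y, huy, hyx⟩ := hmem
    have hyv : y = v := le_antisymm (le_of_not_gt (huy.2 huv.1)) (le_of_not_gt (huv.2 huy.1))
    subst hyv
    exact absurd (hyx.trans hu) (not_le.mpr huv.1)
  have hinj : Function.Injective c := by
    intro x x' h
    rcases lt_trichotomy x x' with hlt | heq | hlt
    · exact absurd h (fun h => key x x' hlt h)
    · exact heq
    · exact absurd h.symm (fun h => key x' x hlt h)
  exact absurd (Finite.of_injective c hinj) (by rw [not_finite_iff_infinite]; infer_instance)

theorem chain_between_sets_of_naturals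
    (A B : Set ℕ) (hAB : A ⊆ B)
    (L : Type u) [LinearOrder L]
    (hmin : ∃ m : L, IsBot m) (hmax : ∃ M : L, IsTop M)
    (hsup : ∀ S : Set L, ∃ s, IsLUB S s)
    (hcard : Cardinal.lift.{u} (Cardinal.mk ↥(B \ A)) + 1 = Cardinal.lift.{0} (Cardinal.mk L)) :
    ∃ 𝓛 : Set (Set ℕ),
      (∀ X ∈ 𝓛, A ⊆ X ∧ X ⊆ B) ∧ A ∈ 𝓛 ∧ B ∈ 𝓛 ∧
      IsChain (· ⊆ ·) 𝓛 ∧ Nonempty (L ≃o 𝓛) ∧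
      ∀ 𝒜 ℬ : Set (Set ℕ), 𝒜 ∪ ℬ = 𝓛 → Disjoint 𝒜 ℬ →
        𝒜.Nonempty → ℬ.Nonempty →
        (∀ X ∈ 𝒜, ∀ Y ∈ ℬ, X ⊂ Y) →
        ⋃₀ 𝒜 ∈ 𝓛 ∧ ⋂₀ ℬ ∈ 𝓛 ∧ (⋂₀ ℬ \ ⋃₀ 𝒜).Subsingleton := by
  obtain ⟨m0, hm0⟩ := hmin
  obtain ⟨M, hM⟩ := hmax
  -- L is countable
  have hBA_le : Cardinal.mk ↥(B \ A) ≤ Cardinal.aleph0 := Cardinal.mk_le_aleph0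
  have hLcount : Countable L := by
    have h1 : Cardinal.lift.{0} (Cardinal.mk L) ≤ Cardinal.aleph0 := by
      rw [← hcard]
      calc Cardinal.lift.{u} (Cardinal.mk ↥(B \ A)) + 1
          ≤ Cardinal.lift.{u} Cardinal.aleph0 + 1 :=
            add_le_add_left (Cardinal.lift_le.mpr hBA_le) 1
        _ = Cardinal.aleph0 + 1 := by rw [Cardinal.lift_aleph0]
        _ = Cardinal.aleph0 := Cardinal.add_one_eq le_rfl
    rw [Cardinal.lift_le_aleph0] at h1
    exact Cardinal.mk_le_aleph0_iff.mp h1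
  haveI := hLcount
  set J : Set L := {x : L | ∃ y, x ⋖ y} with hJdef
  -- obtain the bijection between B \ A and J
  have hequiv : Nonempty (↥(B \ A) ≃ ↥J) := by
    by_cases hfin : Finite L
    · -- finite case
      have hJeq : J = {x : L | x ≠ M} := by
        ext x
        constructor
        · rintro ⟨y, hxy⟩
          intro hxM
          exact absurd (hM y) (not_le.mpr (hxM ▸ hxy.1))
        · intro hx
          have hxM : x < M := lt_of_le_of_ne (hM x) hx
          obtain ⟨t, ht, htmin⟩ := Set.exists_min_image (Set.Ioi x) id
            (Set.toFinite _) ⟨M, hxM⟩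
          exact ⟨t, ht, fun c hc hct => absurd (htmin c hc) (not_le.mpr hct)⟩
      have hMnotJ : M ∉ J := by
        rw [hJeq]; simp
      have huniv : insert M J = Set.univ := by
        ext z
        simp only [Set.mem_insert_iff, Set.mem_univ, iff_true, hJeq, Set.mem_setOf_eq]
        tauto
      have hLeq : Cardinal.mk L = Cardinal.mk ↥J + 1 := by
        rw [← Cardinal.mk_univ, ← huniv, Cardinal.mk_insert hMnotJ]
      rw [← Cardinal.lift_mk_eq']
      have h2 : Cardinal.lift.{u} (Cardinal.mk ↥(B \ A)) + 1
          = Cardinal.lift.{0} (Cardinal.mk ↥J) + 1 := by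
        rw [hcard, hLeq, Cardinal.lift_add, Cardinal.lift_one]
      have hc1 : Cardinal.lift.{u} (Cardinal.mk ↥(B \ A)) < Cardinal.aleph0 := by
        haveI : Finite ↥(B \ A) := by
          by_contra hBAinf
          rw [not_finite_iff_infinite] at hBAinf
          have : Cardinal.aleph0 ≤ Cardinal.lift.{u} (Cardinal.mk ↥(B \ A)) := by
            rw [← Cardinal.lift_aleph0.{u,0}]
            exact Cardinal.lift_le.mpr (Cardinal.aleph0_le_mk _)
          have hfin2 : Cardinal.mk L < Cardinal.aleph0 := Cardinal.lt_aleph0_of_finite L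
          have : Cardinal.aleph0 ≤ Cardinal.lift.{0} (Cardinal.mk L) := by
            rw [← hcard]
            exact this.trans (self_le_add_right _ 1)
          rw [← Cardinal.lift_aleph0.{0,u}] at this
          exact absurd (Cardinal.lift_le.mp this) (not_le.mpr hfin2)
        rw [Cardinal.lift_lt_aleph0]
        exact Cardinal.lt_aleph0_of_finite _
      have hc2 : Cardinal.lift.{0} (Cardinal.mk ↥J) < Cardinal.aleph0 := by
        haveI : Finite ↥J := Subtype.finite
        rw [Cardinal.lift_lt_aleph0]
        exact Cardinal.lt_aleph0_of_finite _
      obtain ⟨m, hm⟩ := Cardinal.lt_aleph0.mp hc1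
      obtain ⟨n, hn⟩ := Cardinal.lt_aleph0.mp hc2
      rw [hm, hn] at h2 ⊢
      have : ((m + 1 : ℕ) : Cardinal) = ((n + 1 : ℕ) : Cardinal) := by
        push_cast
        exact h2
      have : m = n := by
        have := Nat.cast_inj.mp this
        omega
      rw [this]
    · -- infinite case
      rw [not_finite_iff_infinite] at hfin
      haveI := hfin
      haveI hJinf : Infinite ↥J := aux_infinite_J hsup
      haveI hBAinf : Infinite ↥(B \ A) := by
        by_contra hBAfin
        rw [not_infinite_iff_finite] at hBAfin
        haveI := hBAfin
        have h1 : Cardinal.lift.{u} (Cardinal.mk ↥(B \ A)) + 1 < Cardinal.aleph0 := by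
          apply Cardinal.add_lt_aleph0
          · rw [Cardinal.lift_lt_aleph0]
            exact Cardinal.lt_aleph0_of_finite _
          · exact Cardinal.one_lt_aleph0
        rw [hcard] at h1
        have h2 : Cardinal.aleph0 ≤ Cardinal.lift.{0} (Cardinal.mk L) := by
          rw [← Cardinal.lift_aleph0.{0,u}]
          exact Cardinal.lift_le.mpr (Cardinal.aleph0_le_mk L)
        exact absurd h2 (not_le.mpr h1)
      rw [← Cardinal.lift_mk_eq']
      rw [Cardinal.mk_eq_aleph0 ↥(B \ A), Cardinal.mk_eq_aleph0 ↥J,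
        Cardinal.lift_aleph0, Cardinal.lift_aleph0]
  obtain ⟨g0⟩ := hequiv
  -- the chain
  set f : L → Set ℕ := fun l => A ∪ {n : ℕ | ∃ hn : n ∈ B \ A, ((g0 ⟨n, hn⟩ : ↥J) : L) < l}
    with hfdef
  have hfA : ∀ l, A ⊆ f l := fun l => Set.subset_union_left
  have hfB : ∀ l, f l ⊆ B := by
    intro l n hn
    rcases hn with hn | ⟨hn, _⟩
    · exact hAB hn
    · exact hn.1
  have hfmono : ∀ {a b : L}, a ≤ b → f a ⊆ f b := by
    intro a b hab n hn
    rcases hn with hn | ⟨hn, hlt⟩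
    · exact Or.inl hn
    · exact Or.inr ⟨hn, lt_of_lt_of_le hlt hab⟩
  have hfstrict : ∀ {a b : L}, a < b → ∃ n : ℕ, n ∈ f b ∧ n ∉ f a := by
    intro a b hab
    obtain ⟨u, v, hu, huv, hv⟩ := aux_exists_covby hsup hab
    have huJ : u ∈ J := ⟨v, huv⟩
    set nn := g0.symm ⟨u, huJ⟩ with hnn
    have hg : ((g0 ⟨(nn : ℕ), nn.2⟩ : ↥J) : L) = u := by
      have : (⟨(nn : ℕ), nn.2⟩ : ↥(B \ A)) = nn := Subtype.ext rfl
      rw [this, hnn, g0.apply_symm_apply]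
    refine ⟨(nn : ℕ), Or.inr ⟨nn.2, ?_⟩, ?_⟩
    · rw [hg]
      exact lt_of_lt_of_le huv.1 hv
    · rintro (h | ⟨hn, hlt⟩)
      · exact nn.2.2 h
      · have : ((g0 ⟨(nn : ℕ), hn⟩ : ↥J) : L) = u := hg
        rw [this] at hlt
        exact absurd (hlt.trans_le hu) (lt_irrefl u)
  have hfsm : StrictMono f := by
    intro a b hab
    obtain ⟨n, hnb, hna⟩ := hfstrict hab
    exact lt_iff_le_not_ge.mpr ⟨hfmono hab.le, fun h => hna (h hnb)⟩
  have hfbot : f m0 = A := by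
    apply Set.Subset.antisymm _ (hfA m0)
    rintro n (hn | ⟨hn, hlt⟩)
    · exact hn
    · exact absurd (hm0 _) (not_le.mpr hlt)
  have hftop : f M = B := by
    apply Set.Subset.antisymm (hfB M)
    intro n hn
    by_cases hnA : n ∈ A
    · exact Or.inl hnA
    · have hnBA : n ∈ B \ A := ⟨hn, hnA⟩
      refine Or.inr ⟨hnBA, ?_⟩
      obtain ⟨y, hy⟩ := (g0 ⟨n, hnBA⟩ : ↥J).2
      exact lt_of_lt_of_le hy.1 (hM y)
  refine ⟨Set.range f, ?_, ⟨m0, hfbot⟩, ⟨M, hftop⟩, ?_, ⟨StrictMono.orderIso f hfsm⟩, ?_⟩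
  · rintro X ⟨l, rfl⟩
    exact ⟨hfA l, hfB l⟩
  · rintro X ⟨a, rfl⟩ Y ⟨b, rfl⟩ _
    rcases le_total a b with h | h
    · exact Or.inl (hfmono h)
    · exact Or.inr (hfmono h)
  · intro 𝒜 ℬ hun hdis hAne hBne hcut
    have hmem𝓛 : ∀ X, X ∈ 𝒜 ∨ X ∈ ℬ → ∃ l, f l = X := by
      intro X hX
      have : X ∈ 𝒜 ∪ ℬ := hX.elim (fun h => Set.mem_union_left _ h) (fun h => Set.mem_union_right _ h)
      rw [hun] at this
      obtain ⟨l, hl⟩ := this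
      exact ⟨l, hl⟩
    have hmemor : ∀ l : L, f l ∈ 𝒜 ∨ f l ∈ ℬ := by
      intro l
      have : f l ∈ 𝒜 ∪ ℬ := by rw [hun]; exact ⟨l, rfl⟩
      exact this
    have hlt : ∀ a : L, f a ∈ 𝒜 → ∀ b : L, f b ∈ ℬ → a < b := by
      intro a ha b hb
      have hss := hcut (f a) ha (f b) hb
      rw [Set.ssubset_def] at hss
      by_contra hle
      push_neg at hle
      exact hss.2 (hfmono hle)
    obtain ⟨s, hs⟩ := hsup {l : L | f l ∈ 𝒜}
    obtain ⟨X0, hX0⟩ := hAne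
    obtain ⟨a0, ha0⟩ := hmem𝓛 X0 (Or.inl hX0)
    have ha0' : f a0 ∈ 𝒜 := ha0.symm ▸ hX0
    obtain ⟨Y0, hY0⟩ := hBne
    obtain ⟨b0, hb0⟩ := hmem𝓛 Y0 (Or.inr hY0)
    have hb0' : f b0 ∈ ℬ := hb0.symm ▸ hY0
    -- ⋃₀ 𝒜 = f s
    have hG1 : ⋃₀ 𝒜 = f s := by
      apply Set.Subset.antisymm
      · apply Set.sUnion_subset
        intro X hX
        obtain ⟨a, rfl⟩ := hmem𝓛 X (Or.inl hX)
        exact hfmono (hs.1 hX)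
      · rintro n (hn | ⟨hn, hlt'⟩)
        · exact ⟨f a0, ha0', hfA a0 hn⟩
        · have : ∃ a, f a ∈ 𝒜 ∧ ((g0 ⟨n, hn⟩ : ↥J) : L) < a := by
            by_contra h
            push_neg at h
            have : s ≤ ((g0 ⟨n, hn⟩ : ↥J) : L) := hs.2 (fun a ha => h a ha)
            exact absurd (hlt'.trans_le this) (lt_irrefl _)
          obtain ⟨a, haA, halt⟩ := this
          exact ⟨f a, haA, Or.inr ⟨hn, halt⟩⟩
    by_cases hsA : f s ∈ 𝒜
    · -- s is the maximum of the lower part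
      have hsltb : ∀ b : L, f b ∈ ℬ → s < b := fun b hb => hlt s hsA b hb
      by_cases hsJ : s ∈ J
      · -- s has a successor t
        obtain ⟨t, hst⟩ := hsJ
        have htB : f t ∈ ℬ := by
          rcases hmemor t with h | h
          · exact absurd (hs.1 h) (not_le.mpr hst.1)
          · exact h
        have hG2 : ⋂₀ ℬ = f t := by
          apply Set.Subset.antisymm (Set.sInter_subset_of_mem htB)
          intro n hn Y hY
          obtain ⟨b, rfl⟩ := hmem𝓛 Y (Or.inr hY)
          have : t ≤ b := le_of_not_gt (hst.2 (hsltb b hY))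
          exact hfmono this hn
        refine ⟨⟨s, hG1.symm⟩, ⟨t, hG2.symm⟩, ?_⟩
        rw [hG1, hG2]
        intro n hn m hm
        have hkey : ∀ k : ℕ, k ∈ f t \ f s → ∃ hk : k ∈ B \ A,
            ((g0 ⟨k, hk⟩ : ↥J) : L) = s := by
          intro k hk
          obtain ⟨hkt, hks⟩ := hk
          have hkA : k ∉ A := fun h => hks (hfA s h)
          rcases hkt with h | ⟨hk1, hk2⟩
          · exact absurd h hkA
          · refine ⟨hk1, ?_⟩
            have h1 : ¬ ((g0 ⟨k, hk1⟩ : ↥J) : L) < s := fun h => hks (Or.inr ⟨hk1, h⟩)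
            have h2 : ¬ s < ((g0 ⟨k, hk1⟩ : ↥J) : L) := fun h => (hst.2 h) hk2
            exact le_antisymm (not_lt.mp h2) (not_lt.mp h1)
        obtain ⟨hn1, hn2⟩ := hkey n hn
        obtain ⟨hm1, hm2⟩ := hkey m hm
        have : (g0 ⟨n, hn1⟩ : ↥J) = (g0 ⟨m, hm1⟩ : ↥J) := Subtype.ext (hn2.trans hm2.symm)
        have := g0.injective this
        exact congrArg Subtype.val this
      · -- s has no successor
        have hG2 : ⋂₀ ℬ = f s := by
          apply Set.Subset.antisymm
          · intro n hn
            have hnb0 : n ∈ f b0 := hn (f b0) hb0'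
            rcases hnb0 with h | ⟨hn1, _⟩
            · exact hfA s h
            · refine Or.inr ⟨hn1, ?_⟩
              set x : L := ((g0 ⟨n, hn1⟩ : ↥J) : L) with hx
              by_contra hxs
              push_neg at hxs
              have hxJ : x ∈ J := (g0 ⟨n, hn1⟩ : ↥J).2
              have hxltS : s < x := by
                rcases lt_or_eq_of_le hxs with h | h
                · exact h
                · exact absurd (h ▸ hxJ) hsJ
              have hxB : f x ∈ ℬ := by
                rcases hmemor x with h | h
                · exact absurd (hs.1 h) (not_le.mpr hxltS)
                · exact h
              have : n ∈ f x := hn (f x) hxB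
              rcases this with h | ⟨hn2, hlt2⟩
              · exact absurd h hn1.2
              · exact absurd hlt2 (lt_irrefl x)
          · intro n hn Y hY
            obtain ⟨b, rfl⟩ := hmem𝓛 Y (Or.inr hY)
            exact hfmono (hsltb b hY).le hn
        refine ⟨⟨s, hG1.symm⟩, ⟨s, hG2.symm⟩, ?_⟩
        rw [hG1, hG2, Set.diff_self]
        exact Set.subsingleton_empty
    · -- f s ∈ ℬ : s is the minimum of the upper part
      have hsB : f s ∈ ℬ := (hmemor s).resolve_left hsA
      have hG2 : ⋂₀ ℬ = f s := by
        apply Set.Subset.antisymm (Set.sInter_subset_of_mem hsB)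
        intro n hn Y hY
        obtain ⟨b, rfl⟩ := hmem𝓛 Y (Or.inr hY)
        have hsleb : s ≤ b := hs.2 (fun a ha => (hlt a ha b hY).le)
        exact hfmono hsleb hn
      refine ⟨⟨s, hG1.symm⟩, ⟨s, hG2.symm⟩, ?_⟩
      rw [hG1, hG2, Set.diff_self]
      exact Set.subsingleton_empty
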